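/- Fix an integer p ≥ 2, a > 0 and b ∈ ℝ. Define on (−1,1) the two Landau functionals L₁(m) := a·(p−1)·m^p/p − log(2·cosh(a·m^{p−1} + b)) and L₂(m) := −a·m^p/p − b·m + g(m). Then for every m ∈ (−1,1) satisfying the mean-field equation m = tanh(a·m^{p−1} + b), one has L₁(m) = L₂(m). -/

import Mathlib

open Real

/-- Minus the binary entropy as a function of the magnetization `m`:
`g(m) = ((1-m)/2) log((1-m)/2) + ((1+m)/2) log((1+m)/2)`. -/
noncomputable def gEntropy (m : ℝ) : ℝ :=
  ((1 - m) / 2) * Real.log ((1 - m) / 2) + ((1 + m) / 2) * Real.log ((1 + m) / 2)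

/-- The Landau functional of method M1 for the fully connected `p`-spin model:
`L₁(m) = a(p-1)mᵖ/p - log(2 cosh(a m^{p-1} + b))`. -/
noncomputable def landauL1 (p : ℕ) (a b : ℝ) (m : ℝ) : ℝ :=
  a * (p - 1 : ℝ) * m ^ p / p - Real.log (2 * Real.cosh (a * m ^ (p - 1) + b))

/-- The Landau functional of method M2 for the fully connected `p`-spin model:
`L₂(m) = -a mᵖ/p - b m + g(m)`. -/
noncomputable def landauL2 (p : ℕ) (a b : ℝ) (m : ℝ) : ℝ :=
  -(a * m ^ p / p) - b * m + gEntropy m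

/-- The two Landau functionals `L₁` and `L₂` coincide at every point of `(-1,1)`
satisfying the mean-field equation `m = tanh(a m^{p-1} + b)`. -/
theorem landau_functionals_agree_at_stationary_points
    (p : ℕ) (hp : 2 ≤ p) (a b : ℝ) (ha : 0 < a) :
    ∀ m ∈ Set.Ioo (-1 : ℝ) 1,
      m = Real.tanh (a * m ^ (p - 1) + b) → landauL1 p a b m = landauL2 p a b m := by
  intro m _ hmf
  set x : ℝ := a * m ^ (p - 1) + b with hx
  have hc : 0 < Real.cosh x := Real.cosh_pos x
  have h2c : (0:ℝ) < 2 * Real.cosh x := by positivity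
  have h1 : (1 - m) / 2 = Real.exp (-x) / (2 * Real.cosh x) := by
    rw [hmf, Real.tanh_eq_sinh_div_cosh, ← Real.cosh_sub_sinh]
    field_simp
  have h2 : (1 + m) / 2 = Real.exp x / (2 * Real.cosh x) := by
    rw [hmf, Real.tanh_eq_sinh_div_cosh, ← Real.cosh_add_sinh]
    field_simp
  have hl1 : Real.log ((1 - m) / 2) = -x - Real.log (2 * Real.cosh x) := by
    rw [h1, Real.log_div (Real.exp_ne_zero _) (ne_of_gt h2c), Real.log_exp]
  have hl2 : Real.log ((1 + m) / 2) = x - Real.log (2 * Real.cosh x) := by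
    rw [h2, Real.log_div (Real.exp_ne_zero _) (ne_of_gt h2c), Real.log_exp]
  have hmp : m ^ p = m ^ (p - 1) * m := by
    rw [← pow_succ]
    congr 1
    omega
  have hp0 : (p : ℝ) ≠ 0 := by positivity
  unfold landauL1 landauL2 gEntropy
  rw [← hx, hl1, hl2, hmp]
  field_simp
  ring
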